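/- (Oppenheim-type rank inequality) If A and B are N×N positive semidefinite complex matrices and all diagonal entries of A are positive, then rank(A · B) ≥ rank(B), where · is the Schur product. -/

import Mathlib

open scoped ComplexOrder Matrix

/-- Oppenheim-type rank inequality: if `A`, `B` are positive semidefinite and the diagonal
entries of `A` are positive, then `rank (A · B) ≥ rank B` for the Schur product. -/
theorem schur_rank_ge {N : ℕ} (A B : Matrix (Fin N) (Fin N) ℂ)
    (hA : A.PosSemidef) (hB : B.PosSemidef)
    (hdiag : ∀ i, 0 < (A i i).re) :
    B.rank ≤ (Matrix.hadamard A B).rank := by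
  classical
  obtain ⟨C, hC⟩ : ∃ C : Matrix (Fin N) (Fin N) ℂ, A = Cᴴ * C := by
    open scoped MatrixOrder in
    obtain ⟨X, hX, -, hXA⟩ :=
      CFC.exists_sqrt_of_isSelfAdjoint_of_quasispectrumRestricts hA.isHermitian
        (QuasispectrumRestricts.nnreal_of_nonneg hA.nonneg)
    exact ⟨X, by rw [← hXA]; nth_rewrite 1 [← hX.star_eq]; rfl⟩
  -- each column of C is nonzero
  have hcol : ∀ i, ∃ k, C k i ≠ 0 := by
    intro i
    by_contra h
    push_neg at h
    have : A i i = 0 := by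
      rw [hC]
      simp [Matrix.mul_apply, Matrix.conjTranspose_apply, h]
    simpa [this] using hdiag i
  -- choose t avoiding roots of all column polynomials
  obtain ⟨t, ht⟩ : ∃ t : ℂ, ∀ i, (∑ k, C k i * t ^ (k : ℕ)) ≠ 0 := by
    set p : Fin N → Polynomial ℂ := fun i => ∑ k, Polynomial.C (C k i) * Polynomial.X ^ (k : ℕ)
    have hp : ∀ i, p i ≠ 0 := by
      intro i hpi
      obtain ⟨k, hk⟩ := hcol i
      apply hk
      have := congrArg (fun q => Polynomial.coeff q (k : ℕ)) hpi
      simpa [p, Polynomial.finset_sum_coeff, Polynomial.coeff_C_mul, Polynomial.coeff_X_pow,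
        Finset.sum_ite_eq', Fin.val_eq_val] using this
    have hfin : (⋃ i, {x : ℂ | (p i).IsRoot x}).Finite :=
      Set.finite_iUnion fun i => Polynomial.finite_setOf_isRoot (hp i)
    obtain ⟨t, ht⟩ := hfin.infinite_compl.nonempty
    refine ⟨t, fun i hi => ht ?_⟩
    refine Set.mem_iUnion.mpr ⟨i, ?_⟩
    simpa [p, Polynomial.IsRoot, Polynomial.eval_finset_sum] using hi
  set v : Fin N → ℂ := fun i => ∑ k, C k i * t ^ (k : ℕ) with hv
  -- key: kernel inclusion
  have key : ∀ x : Fin N → ℂ, (Matrix.hadamard A B) *ᵥ x = 0 → B *ᵥ (v * x) = 0 := by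
    intro x hx
    set y : Fin N → Fin N → ℂ := fun k => fun j => C k j * x j with hy
    have hsum : ∑ k, (star (y k)) ⬝ᵥ (B *ᵥ (y k)) = 0 := by
      have h0 : (star x) ⬝ᵥ ((Matrix.hadamard A B) *ᵥ x) = 0 := by rw [hx]; simp
      rw [← h0]
      simp only [dotProduct, Matrix.mulVec, Matrix.hadamard_apply, hC,
        Matrix.mul_apply, Matrix.conjTranspose_apply, Pi.star_apply, hy,
        Finset.mul_sum, Finset.sum_mul]
      rw [Finset.sum_comm]
      refine Finset.sum_congr rfl fun k _ => ?_
      rw [Finset.sum_comm]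
      refine Finset.sum_congr rfl fun i _ => Finset.sum_congr rfl fun j _ => ?_
      simp only [star_mul']
      ring
    have hBy : ∀ k, B *ᵥ (y k) = 0 := by
      intro k
      rw [← hB.dotProduct_mulVec_zero_iff]
      refine (Finset.sum_eq_zero_iff_of_nonneg fun k _ => hB.dotProduct_mulVec_nonneg (y k)).mp hsum k (Finset.mem_univ k)
    have hvx : (v * x) = ∑ k : Fin N, t ^ (k : ℕ) • y k := by
      funext j
      simp only [Pi.mul_apply, hv, Finset.sum_apply, Pi.smul_apply, smul_eq_mul, hy,
        Finset.sum_mul]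
      exact Finset.sum_congr rfl fun k _ => by ring
    rw [hvx, ← Matrix.mulVecLin_apply, map_sum]
    refine Finset.sum_eq_zero fun k _ => ?_
    rw [map_smul, Matrix.mulVecLin_apply, hBy k, smul_zero]
  -- linear map between kernels
  have hvne : ∀ i, v i ≠ 0 := ht
  set g : (Fin N → ℂ) →ₗ[ℂ] (Fin N → ℂ) := (Matrix.diagonal v).mulVecLin with hg
  have hmapsto : ∀ x ∈ LinearMap.ker (Matrix.hadamard A B).mulVecLin,
      g x ∈ LinearMap.ker B.mulVecLin := by
    intro x hx
    have : (Matrix.diagonal v) *ᵥ x = v * x := by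
      funext i; simp [Matrix.mulVec_diagonal]
    simp only [LinearMap.mem_ker, Matrix.mulVecLin_apply, hg, this]
    exact key x (by simpa using hx)
  set f := g.restrict hmapsto with hf
  have hinj : Function.Injective f := by
    intro a b hab
    ext i
    have h1 : v i * a.1 i = v i * b.1 i := by
      have := congrArg (fun z => (z : Fin N → ℂ) i) (congrArg Subtype.val hab)
      simpa [hf, hg, Matrix.mulVec_diagonal] using this
    exact mul_left_cancel₀ (hvne i) h1
  have hker : Module.finrank ℂ (LinearMap.ker (Matrix.hadamard A B).mulVecLin) ≤
      Module.finrank ℂ (LinearMap.ker B.mulVecLin) :=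
    LinearMap.finrank_le_finrank_of_injective hinj
  have h1 := LinearMap.finrank_range_add_finrank_ker (Matrix.hadamard A B).mulVecLin
  have h2 := LinearMap.finrank_range_add_finrank_ker B.mulVecLin
  rw [Module.finrank_pi] at h1 h2
  simp only [Fintype.card_fin] at h1 h2
  rw [Matrix.rank, Matrix.rank]
  omega
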